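/- For every $\gamma \in [0, 1/96]$ and every angle $\theta$ with $|\tan\theta| \le \frac{\gamma\left(2\sqrt{1-\gamma^2}+\sqrt{1-4\gamma^2}\right)}{\sqrt{1-\gamma^2}\sqrt{1-4\gamma^2}-2\gamma^2}$ and $|\theta| < \pi/2$, one has $\sqrt{5 - 4\cos\theta} \le \sqrt{5 + 8\gamma^2 - 4\sqrt{1-\gamma^2}\sqrt{1-4\gamma^2}} \le 1.001$. -/

import Mathlib

set_option maxHeartbeats 1000000 in
/-- the key trigonometric estimate of Lemma 6.1:
if `|tan θ|` is bounded by the Reifenberg angle bound, then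
`√(5 - 4cos θ) ≤ √(5 + 8γ² - 4√(1-γ²)√(1-4γ²)) ≤ 1.001`. -/
theorem stmt_6 (γ θ : ℝ) (hγ0 : 0 ≤ γ) (hγ : γ ≤ 1 / 96)
    (hθ : |Real.tan θ| ≤
      γ * (2 * Real.sqrt (1 - γ ^ 2) + Real.sqrt (1 - 4 * γ ^ 2)) /
        (Real.sqrt (1 - γ ^ 2) * Real.sqrt (1 - 4 * γ ^ 2) - 2 * γ ^ 2))
    (hθ2 : |θ| < Real.pi / 2) :
    Real.sqrt (5 - 4 * Real.cos θ) ≤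
        Real.sqrt (5 + 8 * γ ^ 2 -
          4 * Real.sqrt (1 - γ ^ 2) * Real.sqrt (1 - 4 * γ ^ 2)) ∧
      Real.sqrt (5 + 8 * γ ^ 2 -
          4 * Real.sqrt (1 - γ ^ 2) * Real.sqrt (1 - 4 * γ ^ 2)) ≤ 1.001 := by
  set a := Real.sqrt (1 - γ ^ 2) with ha_def
  set b := Real.sqrt (1 - 4 * γ ^ 2) with hb_def
  have hγ2 : γ ^ 2 ≤ (1 / 96) ^ 2 := by
    have := sq_le_sq' (by linarith) hγ
    simpa using this
  have ha0 : 0 ≤ a := Real.sqrt_nonneg _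
  have hb0 : 0 ≤ b := Real.sqrt_nonneg _
  have ha2 : a ^ 2 = 1 - γ ^ 2 := Real.sq_sqrt (by nlinarith)
  have hb2 : b ^ 2 = 1 - 4 * γ ^ 2 := Real.sq_sqrt (by nlinarith)
  -- a*b ≥ 1 - 3γ²
  have hab : 1 - 3 * γ ^ 2 ≤ a * b := by
    nlinarith [sq_nonneg (a * b - (1 - 3 * γ ^ 2)), sq_nonneg (a + b), mul_nonneg ha0 hb0,
      sq_nonneg γ, sq_nonneg (a - b)]
  have hc0 : 0 < a * b - 2 * γ ^ 2 := by nlinarith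
  set c := a * b - 2 * γ ^ 2 with hc_def
  clear_value a b c
  -- key identity: c² + γ²(2a+b)² = 1
  have hkey : c ^ 2 + γ ^ 2 * (2 * a + b) ^ 2 = 1 := by
    have : (a * b) ^ 2 = (1 - γ ^ 2) * (1 - 4 * γ ^ 2) := by
      rw [mul_pow, ha2, hb2]
    nlinarith [this]
  have hcos0 : 0 < Real.cos θ := by
    rcases abs_lt.mp hθ2 with ⟨h1, h2⟩
    exact Real.cos_pos_of_mem_Ioo ⟨h1, h2⟩
  have hcosne : Real.cos θ ≠ 0 := ne_of_gt hcos0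
  -- tan² θ ≤ (1 - c²)/c²
  have htan2 : Real.tan θ ^ 2 ≤ (γ * (2 * a + b) / c) ^ 2 := by
    have h2 : Real.tan θ ^ 2 = |Real.tan θ| ^ 2 := (sq_abs _).symm
    rw [h2]
    exact pow_le_pow_left₀ (abs_nonneg _) hθ 2
  have hsec : (1 + Real.tan θ ^ 2)⁻¹ = Real.cos θ ^ 2 := Real.inv_one_add_tan_sq hcosne
  have hcos2 : c ^ 2 ≤ Real.cos θ ^ 2 := by
    have hc2 : 0 < c ^ 2 := by positivity
    have h4 : (γ * (2 * a + b) / c) ^ 2 = (1 - c ^ 2) / c ^ 2 := by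
      rw [div_pow, mul_pow]
      congr 1
      linarith [hkey]
    have h5 : 1 + Real.tan θ ^ 2 ≤ 1 / c ^ 2 := by
      rw [h4] at htan2
      have : (1 : ℝ) / c ^ 2 = 1 + (1 - c ^ 2) / c ^ 2 := by field_simp; ring
      rw [this]; linarith
    rw [← hsec]
    have h6 : 0 < 1 + Real.tan θ ^ 2 := by positivity
    have h7 : c ^ 2 * (1 + Real.tan θ ^ 2) ≤ 1 := by
      have := mul_le_mul_of_nonneg_left h5 hc2.le
      rwa [mul_one_div, div_self (ne_of_gt hc2)] at this
    have h8 : (1 + Real.tan θ ^ 2)⁻¹ * (1 + Real.tan θ ^ 2) = 1 :=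
      inv_mul_cancel₀ (ne_of_gt h6)
    nlinarith [h7, h8]
  have hcosc : c ≤ Real.cos θ := by
    have := Real.sqrt_le_sqrt hcos2
    rwa [Real.sqrt_sq hc0.le, Real.sqrt_sq hcos0.le] at this
  refine ⟨?_, ?_⟩
  · apply Real.sqrt_le_sqrt
    simp only [hc_def] at hcosc
    linarith
  · have h1 : 5 + 8 * γ ^ 2 - 4 * a * b ≤ (1.001 : ℝ) ^ 2 := by
      have e : (1.001 : ℝ) ^ 2 = 1002001 / 1000000 := by norm_num
      rw [e]
      have h96 : γ ^ 2 ≤ 1 / 9216 := by nlinarith [hγ2]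
      nlinarith [hab, h96]
    calc Real.sqrt (5 + 8 * γ ^ 2 - 4 * a * b) ≤ Real.sqrt ((1.001 : ℝ) ^ 2) :=
          Real.sqrt_le_sqrt h1
      _ = 1.001 := Real.sqrt_sq (by norm_num)
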